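/- If v_1,…,v_{J} are unit vectors in ℝ^M all lying in the ρ-neighborhood of a linear subspace Π of dimension J−1 (with 0 < ρ < 1), then the J-dimensional volume of the parallelepiped spanned by v_1,…,v_J is at most C·ρ for a constant C depending only on M and J. -/

import Mathlib

open Module RealInnerProductSpace

theorem stmt_5 (M J : ℕ) (hJ : 1 ≤ J) :
    ∃ C : ℝ, 0 < C ∧
      ∀ (ρ : ℝ), 0 < ρ → ρ < 1 →
        ∀ (P : Submodule ℝ (EuclideanSpace ℝ (Fin M))), finrank ℝ P = J - 1 →
          ∀ v : Fin J → EuclideanSpace ℝ (Fin M),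
            (∀ i, ‖v i‖ = 1) →
            (∀ i, Metric.infDist (v i) (P : Set (EuclideanSpace ℝ (Fin M))) ≤ ρ) →
            Real.sqrt (Matrix.det (Matrix.of fun i j : Fin J => ⟪v i, v j⟫)) ≤ C * ρ := by
  classical
  refine ⟨Real.sqrt (2 ^ J * J.factorial), Real.sqrt_pos.mpr (by positivity), ?_⟩
  intro ρ hρ hρ1 P hP v hv hd
  have hPne : ((P : Set (EuclideanSpace ℝ (Fin M)))).Nonempty := ⟨0, P.zero_mem⟩
  set q : Fin J → P := fun i => P.orthogonalProjectionOnto (v i) with hq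
  set p : Fin J → EuclideanSpace ℝ (Fin M) := fun i => (q i : EuclideanSpace ℝ (Fin M)) with hp
  set e : Fin J → EuclideanSpace ℝ (Fin M) := fun i => v i - p i with he
  have hpm : ∀ i, p i ∈ P := fun i => (q i).2
  have hem : ∀ i, e i ∈ Pᗮ := fun i => Submodule.sub_starProjection_mem_orthogonal (K := P) (v i)
  have hvpe : ∀ i, v i = p i + e i := fun i => by simp [he]
  -- minimality of the projection
  have hmin : ∀ i, ∀ y ∈ P, ‖e i‖ ≤ ‖v i - y‖ := by
    intro i y hy
    have hz : p i - y ∈ P := P.sub_mem (hpm i) hy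
    have hinner : ⟪e i, p i - y⟫ = 0 :=
      Submodule.inner_left_of_mem_orthogonal hz (hem i)
    have hdecomp : v i - y = e i + (p i - y) := by
      simp only [he]; abel
    have hsq : ‖v i - y‖ ^ 2 = ‖e i‖ ^ 2 + ‖p i - y‖ ^ 2 := by
      rw [hdecomp, norm_add_sq_real, hinner]; ring
    nlinarith [norm_nonneg (v i - y), norm_nonneg (e i), norm_nonneg (p i - y)]
  have heρ : ∀ i, ‖e i‖ ≤ ρ := by
    intro i
    refine le_trans ?_ (hd i)
    by_contra h
    push_neg at h
    obtain ⟨y, hy, hdy⟩ := (Metric.infDist_lt_iff hPne).mp h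
    rw [dist_eq_norm] at hdy
    exact absurd (hmin i y hy) (by linarith)
  have hpn : ∀ i, ‖p i‖ ≤ 1 := by
    intro i
    have hinner : ⟪p i, e i⟫ = 0 :=
      Submodule.inner_right_of_mem_orthogonal (hpm i) (hem i)
    have hsq : ‖v i‖ ^ 2 = ‖p i‖ ^ 2 + ‖e i‖ ^ 2 := by
      rw [hvpe i, norm_add_sq_real, hinner]; ring
    rw [hv i] at hsq
    nlinarith [norm_nonneg (p i), norm_nonneg (e i)]
  set A : Matrix (Fin J) (Fin J) ℝ := Matrix.of fun i j => ⟪p i, p j⟫ with hA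
  set B : Matrix (Fin J) (Fin J) ℝ := Matrix.of fun i j => ⟪e i, e j⟫ with hB
  have hsplit : (Matrix.of fun i j : Fin J => ⟪v i, v j⟫) = A + B := by
    ext i j
    have h1 : ⟪p i, e j⟫ = 0 :=
      Submodule.inner_right_of_mem_orthogonal (hpm i) (hem j)
    have h2 : ⟪e i, p j⟫ = 0 :=
      Submodule.inner_left_of_mem_orthogonal (hpm j) (hem i)
    simp only [Matrix.of_apply, Matrix.add_apply, hA, hB]
    rw [hvpe i, hvpe j, inner_add_left, inner_add_right, inner_add_right, h1, h2]
    simp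
  -- determinant expansion over rows
  have hdet : (A + B).det = ∑ s : Finset (Fin J), Matrix.det (Matrix.of (s.piecewise A B)) :=
    Matrix.detRowAlternating.toMultilinearMap.map_add_univ A B
  -- the all-A term vanishes
  have hA0 : A.det = 0 := by
    have hcard : ¬ LinearIndependent ℝ q := by
      intro h
      have hle := h.fintype_card_le_finrank
      rw [Fintype.card_fin, hP] at hle
      omega
    obtain ⟨g, hg, i₀, hgi⟩ := Fintype.not_linearIndependent_iff.mp hcard
    rw [← Matrix.exists_mulVec_eq_zero_iff]
    refine ⟨g, fun h0 => hgi (congrFun h0 i₀), ?_⟩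
    have hsum : ∑ i, g i • p i = 0 := by
      have := congrArg (fun x : P => (x : EuclideanSpace ℝ (Fin M))) hg
      simpa [hp] using this
    funext j
    have : A.mulVec g j = ⟪p j, ∑ i, g i • p i⟫ := by
      rw [inner_sum]
      simp only [real_inner_smul_right]
      simp [Matrix.mulVec, dotProduct, hA, mul_comm]
    rw [this, hsum, inner_zero_right]
    rfl
  -- entry bounds
  have hA_le : ∀ i j, |A i j| ≤ 1 := by
    intro i j
    simp only [hA, Matrix.of_apply]
    calc |⟪p i, p j⟫| ≤ ‖p i‖ * ‖p j‖ := abs_real_inner_le_norm _ _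
      _ ≤ 1 * 1 := by
          exact mul_le_mul (hpn i) (hpn j) (norm_nonneg _) zero_le_one
      _ = 1 := one_mul 1
  have hB_le : ∀ i j, |B i j| ≤ ρ ^ 2 := by
    intro i j
    simp only [hB, Matrix.of_apply]
    calc |⟪e i, e j⟫| ≤ ‖e i‖ * ‖e j‖ := abs_real_inner_le_norm _ _
      _ ≤ ρ * ρ := mul_le_mul (heρ i) (heρ j) (norm_nonneg _) hρ.le
      _ = ρ ^ 2 := (sq ρ).symm
  -- bound each term
  have hterm : ∀ s : Finset (Fin J), Matrix.det (Matrix.of (s.piecewise A B)) ≤ (J.factorial : ℝ) * ρ ^ 2 := by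
    intro s
    by_cases hs : s = Finset.univ
    · subst hs
      erw [Finset.piecewise_univ]
      have h0 : Matrix.det (Matrix.of A) = 0 := hA0
      rw [h0]
      positivity
    · obtain ⟨k, hk⟩ : ∃ k, k ∉ s := by
        by_contra hc
        push_neg at hc
        exact hs (Finset.eq_univ_iff_forall.mpr hc)
      set Mm : Matrix (Fin J) (Fin J) ℝ := s.piecewise A B with hMm
      have hrow : ∀ i j, |Mm i j| ≤ 1 := by
        intro i j
        by_cases hi : i ∈ s
        · simpa [hMm, Finset.piecewise, hi] using hA_le i j
        · have : |Mm i j| ≤ ρ ^ 2 := by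
            simpa [hMm, Finset.piecewise, hi] using hB_le i j
          nlinarith
      have hrowk : ∀ j, |Mm k j| ≤ ρ ^ 2 := by
        intro j
        simpa [hMm, Finset.piecewise, hk] using hB_le k j
      refine le_trans (le_abs_self _) ?_
      rw [Matrix.det_apply']
      refine le_trans (Finset.abs_sum_le_sum_abs _ _) ?_
      have hσ : ∀ σ : Equiv.Perm (Fin J),
          |(Equiv.Perm.sign σ : ℤ) * ∏ i, Mm (σ i) i| ≤ ρ ^ 2 := by
        intro σ
        have hsgn : |((Equiv.Perm.sign σ : ℤ) : ℝ)| = 1 := by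
          rcases Int.units_eq_one_or (Equiv.Perm.sign σ) with h | h <;> simp [h]
        rw [abs_mul, hsgn, one_mul, Finset.abs_prod]
        calc (∏ i, |Mm (σ i) i|)
            ≤ ∏ i, (if i = σ⁻¹ k then ρ ^ 2 else 1) := by
              refine Finset.prod_le_prod (fun i _ => abs_nonneg _) ?_
              intro i _
              by_cases hik : i = σ⁻¹ k
              · subst hik
                simpa [Equiv.Perm.inv_def, Equiv.apply_symm_apply] using hrowk (σ⁻¹ k)
              · rw [if_neg hik]; exact hrow (σ i) i
          _ = ρ ^ 2 := (Finset.prod_ite_eq' Finset.univ (σ⁻¹ k) fun _ => ρ ^ 2).trans (by simp)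
      calc (∑ σ : Equiv.Perm (Fin J), |(Equiv.Perm.sign σ : ℤ) * ∏ i, Mm (σ i) i|)
          ≤ ∑ _σ : Equiv.Perm (Fin J), ρ ^ 2 := Finset.sum_le_sum fun σ _ => hσ σ
        _ = (J.factorial : ℝ) * ρ ^ 2 := by
            simp [Finset.sum_const, Fintype.card_perm, mul_comm]
  -- put things together
  have hdet_le : (Matrix.of fun i j : Fin J => ⟪v i, v j⟫).det
      ≤ (2 ^ J * J.factorial : ℝ) * ρ ^ 2 := by
    rw [hsplit, hdet]
    calc (∑ s : Finset (Fin J), Matrix.det (Matrix.of (s.piecewise A B)))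
        ≤ ∑ _s : Finset (Fin J), (J.factorial : ℝ) * ρ ^ 2 :=
          Finset.sum_le_sum fun s _ => hterm s
      _ = (2 ^ J * J.factorial : ℝ) * ρ ^ 2 := by
          simp [Finset.sum_const, Fintype.card_finset, mul_assoc]
  calc Real.sqrt ((Matrix.of fun i j : Fin J => ⟪v i, v j⟫).det)
      ≤ Real.sqrt ((2 ^ J * J.factorial : ℝ) * ρ ^ 2) := Real.sqrt_le_sqrt hdet_le
    _ = Real.sqrt (2 ^ J * J.factorial) * ρ := by
        rw [Real.sqrt_mul (by positivity), Real.sqrt_sq hρ.le]
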